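/- Let G₁ and G₂ be connected finite simple graphs on vertex sets {1,…,k₁} and {1,…,k₂} with Laplacian matrices L₁ and L₂, let s ∈ {1,…,k₂}, and suppose every eigenvector of L₂ has a nonzero s-th entry. Let L = I_{k₁} ⊗ L₂ + L₁ ⊗ (e_s e_sᵀ) be the composite matrix. Then for every vertex w ∈ {1,…,k₁}, the pair (L₁, e_w) is controllable if and only if the pair (L, e_{(w,s)}) is controllable, where e_{(w,s)} is the standard basis vector of ℝ^{k₁·k₂} supported at position (w,s). -/

import Mathlib

/-- The composite matrix `L = I_{k₁} ⊗ L₂ + L₁ ⊗ (e_s e_sᵀ)`, indexed by pairs. -/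
def composite {k₁ k₂ : ℕ} (L₁ : Matrix (Fin k₁) (Fin k₁) ℝ) (L₂ : Matrix (Fin k₂) (Fin k₂) ℝ)
    (s : Fin k₂) : Matrix (Fin k₁ × Fin k₂) (Fin k₁ × Fin k₂) ℝ :=
  Matrix.of fun p q =>
    (if p.1 = q.1 then L₂ p.2 q.2 else 0) +
    L₁ p.1 q.1 * ((if p.2 = s then (1 : ℝ) else 0) * (if q.2 = s then (1 : ℝ) else 0))

/-- A pair `(M, b)` is controllable if `b, M b, M² b, …` span the whole space. -/
def Controllable {n : Type*} [Fintype n] [DecidableEq n]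
    (M : Matrix n n ℝ) (b : n → ℝ) : Prop :=
  Submodule.span ℝ (Set.range fun m : ℕ => (M ^ m).mulVec b) = ⊤

section Helpers

open Matrix Submodule

variable {n : Type*} [Fintype n] [DecidableEq n]

lemma isSymmetric_toEuclideanLin {M : Matrix n n ℝ} (hM : M.IsSymm) :
    (Matrix.toEuclideanLin M).IsSymmetric := by
  rw [← Matrix.isHermitian_iff_isSymmetric]
  rwa [Matrix.IsHermitian, Matrix.conjTranspose_eq_transpose_of_trivial]

theorem controllable_iff {M : Matrix n n ℝ} (hM : M.IsSymm) (b : n → ℝ) :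
    Controllable M b ↔
      ∀ v : n → ℝ, v ≠ 0 → (∃ μ : ℝ, M.mulVec v = μ • v) → v ⬝ᵥ b ≠ 0 := by
  constructor
  · rintro hc v hv ⟨μ, hμ⟩ hvb
    have hMv : ∀ x : n → ℝ, v ⬝ᵥ M.mulVec x = μ * (v ⬝ᵥ x) := by
      intro x
      rw [Matrix.dotProduct_mulVec, ← Matrix.mulVec_transpose, hM.eq, hμ,
        smul_dotProduct, smul_eq_mul]
    have key : ∀ m : ℕ, v ⬝ᵥ (M ^ m).mulVec b = 0 := by
      intro m
      induction m with
      | zero => simpa using hvb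
      | succ m ih =>
          rw [pow_succ', ← Matrix.mulVec_mulVec, hMv, ih, mul_zero]
    let f : (n → ℝ) →ₗ[ℝ] ℝ :=
      { toFun := fun x => v ⬝ᵥ x
        map_add' := fun x y => dotProduct_add v x y
        map_smul' := fun c x => by simp }
    have hle : Submodule.span ℝ (Set.range fun m : ℕ => (M ^ m).mulVec b) ≤
        LinearMap.ker f := by
      rw [Submodule.span_le]
      rintro x ⟨m, rfl⟩
      exact key m
    rw [hc, top_le_iff] at hle
    have hm : v ∈ LinearMap.ker f := hle.symm ▸ Submodule.mem_top
    exact hv (dotProduct_self_eq_zero.mp (LinearMap.mem_ker.mp hm))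
  · intro h
    by_contra hc
    set T : EuclideanSpace ℝ n →ₗ[ℝ] EuclideanSpace ℝ n := Matrix.toEuclideanLin M with hT
    have hTsym := isSymmetric_toEuclideanLin hM
    set g : ℕ → EuclideanSpace ℝ n :=
      fun m => (WithLp.equiv 2 (n → ℝ)).symm ((M ^ m).mulVec b) with hg
    set K : Submodule ℝ (EuclideanSpace ℝ n) := Submodule.span ℝ (Set.range g) with hK
    have hmap : K.map (WithLp.linearEquiv 2 ℝ (n → ℝ) :
          EuclideanSpace ℝ n →ₗ[ℝ] (n → ℝ)) =
        Submodule.span ℝ (Set.range fun m : ℕ => (M ^ m).mulVec b) := by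
      rw [hK, Submodule.map_span]
      congr 1
      rw [← Set.range_comp]
      rfl
    have hKtop : K ≠ ⊤ := by
      intro hKt
      apply hc
      show Submodule.span ℝ (Set.range fun m : ℕ => (M ^ m).mulVec b) = ⊤
      rw [← hmap, hKt, Submodule.map_top, LinearEquiv.range]
    have hgen : ∀ m, T (g m) = g (m + 1) := by
      intro m
      show (WithLp.equiv 2 (n → ℝ)).symm (M *ᵥ ((M ^ m) *ᵥ b)) = _
      rw [Matrix.mulVec_mulVec, ← pow_succ']
    have hTK : K ≤ K.comap T := by
      rw [hK, Submodule.span_le]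
      rintro x ⟨m, rfl⟩
      exact Submodule.mem_comap.mpr (hgen m ▸ Submodule.subset_span ⟨m + 1, rfl⟩)
    have hTKo : ∀ x ∈ Kᗮ, T x ∈ Kᗮ := by
      intro x hx
      rw [Submodule.mem_orthogonal]
      intro y hy
      rw [← hTsym y x]
      exact hx _ (hTK hy)
    have hKo : Kᗮ ≠ ⊥ := fun h0 => hKtop (Submodule.orthogonal_eq_bot_iff.mp h0)
    haveI : Nontrivial ↥Kᗮ := Submodule.nontrivial_iff_ne_bot.mpr hKo
    set T' : ↥Kᗮ →ₗ[ℝ] ↥Kᗮ := T.restrict hTKo with hT'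
    have hT'sym : T'.IsSymmetric := by
      intro x y
      have := hTsym (x : EuclideanSpace ℝ n) (y : EuclideanSpace ℝ n)
      simpa [hT', Submodule.coe_inner, LinearMap.restrict_coe_apply] using this
    obtain ⟨y, hy⟩ := hT'sym.hasEigenvalue_iSup_of_finiteDimensional.exists_hasEigenvector
    set μ : ℝ := _
    have hyv : T (y : EuclideanSpace ℝ n) = μ • (y : EuclideanSpace ℝ n) := by
      have := hy.apply_eq_smul
      calc T (y : EuclideanSpace ℝ n) = ↑(T' y) := (LinearMap.restrict_coe_apply _ _ _).symm
        _ = μ • (y : EuclideanSpace ℝ n) := by rw [this]; rfl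
    set v : n → ℝ := WithLp.equiv 2 (n → ℝ) (y : EuclideanSpace ℝ n) with hv
    have hv0 : v ≠ 0 := by
      simp only [hv, ne_eq]
      intro h0
      apply hy.right
      exact Subtype.coe_injective ((WithLp.equiv 2 (n → ℝ)).injective (by simpa using h0))
    have hvb : v ⬝ᵥ b = 0 := by
      have hb : g 0 ∈ K := Submodule.subset_span ⟨0, rfl⟩
      have := (Submodule.mem_orthogonal K (y : EuclideanSpace ℝ n)).mp y.2 _ hb
      rw [hg] at this
      simp only [pow_zero, Matrix.one_mulVec] at this
      rw [PiLp.inner_apply] at this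
      simpa [hv, dotProduct, mul_comm] using this
    exact h v hv0 ⟨μ, by
      have := congrArg (WithLp.equiv 2 (n → ℝ)) hyv
      simpa [hv, hT, Matrix.toEuclideanLin_apply] using this⟩ hvb

theorem exists_eigenvector_of_isSymm [Nonempty n] {M : Matrix n n ℝ} (hM : M.IsSymm) :
    ∃ v : n → ℝ, v ≠ 0 ∧ ∃ μ : ℝ, M.mulVec v = μ • v := by
  have hTsym := isSymmetric_toEuclideanLin hM
  haveI : Nontrivial (EuclideanSpace ℝ n) :=
    (WithLp.linearEquiv 2 ℝ (n → ℝ)).toEquiv.nontrivial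
  obtain ⟨y, hy⟩ := hTsym.hasEigenvalue_iSup_of_finiteDimensional.exists_hasEigenvector
  refine ⟨WithLp.equiv 2 (n → ℝ) y, ?_, ?_⟩
  · intro h0
    exact hy.right ((WithLp.equiv 2 (n → ℝ)).injective (by simpa using h0))
  · exact ⟨_, by simpa using congrArg (WithLp.equiv 2 (n → ℝ)) hy.apply_eq_smul⟩

lemma composite_isSymm {k₁ k₂ : ℕ} {L₁ : Matrix (Fin k₁) (Fin k₁) ℝ}
    {L₂ : Matrix (Fin k₂) (Fin k₂) ℝ} (h₁ : L₁.IsSymm) (h₂ : L₂.IsSymm) (s : Fin k₂) :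
    (composite L₁ L₂ s).IsSymm := by
  apply Matrix.IsSymm.ext
  rintro ⟨i, a⟩ ⟨j, b⟩
  simp only [composite, Matrix.of_apply]
  rw [h₁.apply, h₂.apply]
  by_cases hij : i = j
  · subst hij; ring
  · rw [if_neg (Ne.symm hij), if_neg hij]; ring

lemma composite_mulVec {k₁ k₂ : ℕ} (L₁ : Matrix (Fin k₁) (Fin k₁) ℝ)
    (L₂ : Matrix (Fin k₂) (Fin k₂) ℝ) (s : Fin k₂) (v : Fin k₁ × Fin k₂ → ℝ)
    (i : Fin k₁) (a : Fin k₂) :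
    (composite L₁ L₂ s).mulVec v (i, a) =
      L₂.mulVec (fun b => v (i, b)) a +
        (if a = s then L₁.mulVec (fun j => v (j, s)) i else 0) := by
  simp only [Matrix.mulVec, dotProduct, composite, Matrix.of_apply,
    Fintype.sum_prod_type, add_mul, Finset.sum_add_distrib]
  congr 1
  · rw [Finset.sum_eq_single i]
    · simp
    · intro j _ hji
      simp [Ne.symm hji]
    · simp
  · by_cases has : a = s
    · subst has
      simp [Finset.sum_ite_eq', mul_comm, mul_assoc]
    · simp [has]

end Helpers

open Matrix

theorem stmt_6 (k₁ k₂ : ℕ)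
    (G₁ : SimpleGraph (Fin k₁)) [DecidableRel G₁.Adj] (hG₁ : G₁.Connected)
    (G₂ : SimpleGraph (Fin k₂)) [DecidableRel G₂.Adj] (hG₂ : G₂.Connected)
    (s : Fin k₂)
    (h₂ : ∀ v : Fin k₂ → ℝ, v ≠ 0 → (∃ μ : ℝ, (G₂.lapMatrix ℝ).mulVec v = μ • v) → v s ≠ 0)
    (w : Fin k₁) :
    Controllable (G₁.lapMatrix ℝ) (Pi.single w 1) ↔
      Controllable (composite (G₁.lapMatrix ℝ) (G₂.lapMatrix ℝ) s) (Pi.single (w, s) 1) := by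
  classical
  have hs₁ : (G₁.lapMatrix ℝ).IsSymm := G₁.isSymm_lapMatrix ℝ
  have hs₂ : (G₂.lapMatrix ℝ).IsSymm := G₂.isSymm_lapMatrix ℝ
  rw [controllable_iff hs₁, controllable_iff (composite_isSymm hs₁ hs₂ s)]
  simp only [dotProduct_single, mul_one]
  set A₁ := G₁.lapMatrix ℝ
  set A₂ := G₂.lapMatrix ℝ
  constructor
  · intro h v hv hev
    obtain ⟨lam, hlam⟩ := hev
    have heqv : ∀ i, A₂.mulVec (fun b => v (i, b)) +
        Pi.single s (A₁.mulVec (fun r => v (r, s)) i) = lam • (fun b => v (i, b)) := by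
      intro i
      funext a
      have h1 := congrFun hlam (i, a)
      rw [composite_mulVec] at h1
      simp only [Pi.add_apply, Pi.smul_apply, smul_eq_mul, Pi.single_apply]
      simpa using h1
    have hu0 : (fun r => v (r, s)) ≠ (0 : Fin k₁ → ℝ) := by
      intro h0
      have hc0 : A₁.mulVec (fun r => v (r, s)) = 0 := by rw [h0, Matrix.mulVec_zero]
      have hvi : ∀ i, (fun b => v (i, b)) = (0 : Fin k₂ → ℝ) := by
        intro i
        by_contra hne
        have heig : A₂.mulVec (fun b => v (i, b)) = lam • (fun b => v (i, b)) := by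
          have := heqv i
          rw [hc0] at this
          simpa using this
        exact h₂ _ hne ⟨lam, heig⟩ (congrFun h0 i)
      exact hv (funext fun p => congrFun (hvi p.1) p.2)
    by_cases hex : ∃ y : Fin k₂ → ℝ, y ≠ 0 ∧ A₂.mulVec y = lam • y
    · obtain ⟨y, hy0, hyl⟩ := hex
      have hys : y s ≠ 0 := h₂ y hy0 ⟨lam, hyl⟩
      have hc0 : A₁.mulVec (fun r => v (r, s)) = 0 := by
        funext i
        have h3 := congrArg (fun z => y ⬝ᵥ z) (heqv i)
        simp only [dotProduct_add, dotProduct_single,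
          dotProduct_smul, smul_eq_mul] at h3
        rw [Matrix.dotProduct_mulVec, ← Matrix.mulVec_transpose, hs₂.eq, hyl,
          smul_dotProduct, smul_eq_mul] at h3
        have h4 : y s * A₁.mulVec (fun r => v (r, s)) i = 0 := by linarith
        simpa using (mul_eq_zero.mp h4).resolve_left hys
      have := h (fun r => v (r, s)) hu0 ⟨0, by rw [hc0, zero_smul]⟩
      simpa using this
    · push_neg at hex
      obtain ⟨i₀, hi₀⟩ : ∃ i₀, v (i₀, s) ≠ 0 := by
        by_contra hall
        push_neg at hall
        exact hu0 (funext hall)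
      have hprop : ∀ i j, A₁.mulVec (fun r => v (r, s)) j * v (i, s) =
          A₁.mulVec (fun r => v (r, s)) i * v (j, s) := by
        intro i j
        set ci := A₁.mulVec (fun r => v (r, s)) i with hci
        set cj := A₁.mulVec (fun r => v (r, s)) j with hcj
        have hvi := heqv i
        have hvj := heqv j
        have hz : A₂.mulVec (cj • (fun b => v (i, b)) - ci • (fun b => v (j, b)))
            = lam • (cj • (fun b => v (i, b)) - ci • (fun b => v (j, b))) := by
          rw [Matrix.mulVec_sub, Matrix.mulVec_smul, Matrix.mulVec_smul,
            eq_sub_of_add_eq hvi, eq_sub_of_add_eq hvj]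
          funext b
          simp only [Pi.sub_apply, Pi.smul_apply, Pi.single_apply, smul_eq_mul,
            Pi.add_apply]
          by_cases hbs : b = s
          · rw [if_pos hbs, if_pos hbs, ← hci, ← hcj]; ring
          · rw [if_neg hbs, if_neg hbs]; ring
        have hz0 : cj • (fun b => v (i, b)) - ci • (fun b => v (j, b)) = 0 := by
          by_contra hne
          exact hex _ hne hz
        have := congrFun hz0 s
        simp only [Pi.sub_apply, Pi.smul_apply, smul_eq_mul, Pi.zero_apply] at this
        linarith
      set μ : ℝ := A₁.mulVec (fun r => v (r, s)) i₀ / v (i₀, s) with hμ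
      have heig : A₁.mulVec (fun r => v (r, s)) = μ • (fun r => v (r, s)) := by
        funext j
        have := hprop i₀ j
        simp only [Pi.smul_apply, smul_eq_mul, hμ]
        field_simp
        linarith
      have := h (fun r => v (r, s)) hu0 ⟨μ, heig⟩
      simpa using this
  · intro h x hx hev
    obtain ⟨μ, hμ⟩ := hev
    haveI : Nonempty (Fin k₂) := ⟨s⟩
    set Mμ : Matrix (Fin k₂) (Fin k₂) ℝ := Matrix.of (fun a b =>
      A₂ a b + μ * ((if a = s then (1 : ℝ) else 0) * (if b = s then 1 else 0))) with hMμdef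
    have hMμs : Mμ.IsSymm := by
      apply Matrix.IsSymm.ext
      intro a b
      simp only [hMμdef, Matrix.of_apply]
      rw [hs₂.apply]
      by_cases hab : a = b
      · subst hab; ring
      · by_cases has : a = s
        · subst has
          rw [if_neg (fun hbs => hab hbs.symm)]
          ring
        · rw [if_neg has]
          ring
    have hMμ_mulVec : ∀ (z : Fin k₂ → ℝ) (a : Fin k₂),
        Mμ.mulVec z a = A₂.mulVec z a + (if a = s then μ * z s else 0) := by
      intro z a
      simp only [Matrix.mulVec, dotProduct, hMμdef, Matrix.of_apply, add_mul,
        Finset.sum_add_distrib]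
      congr 1
      by_cases has : a = s
      · subst has
        simp [Finset.sum_ite_eq', mul_comm, mul_assoc]
      · simp [has]
    obtain ⟨y, hy0, ν, hyν⟩ := exists_eigenvector_of_isSymm hMμs
    have hys : y s ≠ 0 := by
      intro h0
      have heig : A₂.mulVec y = ν • y := by
        funext a
        have := congrFun hyν a
        rw [hMμ_mulVec] at this
        simpa [h0] using this
      exact h₂ y hy0 ⟨ν, heig⟩ h0
    set v : Fin k₁ × Fin k₂ → ℝ := fun p => x p.1 * y p.2 with hvdef
    have hv0 : v ≠ 0 := by
      obtain ⟨i, hi⟩ := Function.ne_iff.mp hx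
      intro h0
      have := congrFun h0 (i, s)
      simp only [hvdef, Pi.zero_apply] at this
      rcases mul_eq_zero.mp this with hcase | hcase
      · exact hi hcase
      · exact hys hcase
    have hveig : (composite A₁ A₂ s).mulVec v = ν • v := by
      funext p
      obtain ⟨i, a⟩ := p
      rw [composite_mulVec]
      have e1 : A₂.mulVec (fun b => v (i, b)) a = x i * A₂.mulVec y a := by
        simp only [hvdef, Matrix.mulVec, dotProduct, Finset.mul_sum]
        congr 1
        funext b
        ring
      have e2 : A₁.mulVec (fun j => v (j, s)) i = μ * x i * y s := by
        have hxy : (fun j => v (j, s)) = y s • x := by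
          funext j
          simp [hvdef, mul_comm]
        rw [hxy, Matrix.mulVec_smul, hμ]
        simp only [Pi.smul_apply, smul_eq_mul]
        ring
      have e3 := congrFun hyν a
      rw [hMμ_mulVec] at e3
      rw [e1, e2]
      simp only [hvdef, Pi.smul_apply, smul_eq_mul]
      simp only [Pi.smul_apply, smul_eq_mul] at e3
      by_cases has : a = s
      · rw [if_pos has]
        rw [if_pos has] at e3
        linear_combination x i * e3
      · rw [if_neg has]
        rw [if_neg has] at e3
        linear_combination x i * e3
    have hws := h v hv0 ⟨ν, hveig⟩
    intro h0
    apply hws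
    simp [hvdef, h0]
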